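/- Let q be an odd prime and let K be an algebraic closure of the field with q elements. Then any subgroup Q of SL(2,K) isomorphic to the quaternion group of order 8 contains its own centralizer in SL(2,K). -/

import Mathlib

lemma sl2_sq_one {K : Type*} [Field K] (h2 : (2:K) ≠ 0)
    (m : Matrix (Fin 2) (Fin 2) K) (hdet : m.det = 1) (hsq : m * m = 1)
    (hne : m ≠ 1) : m = -1 := by
  have h00 := congrFun (congrFun hsq 0) 0
  have h01 := congrFun (congrFun hsq 0) 1
  have h10 := congrFun (congrFun hsq 1) 0
  simp [Matrix.mul_apply, Fin.sum_univ_two, Matrix.one_apply] at h00 h01 h10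
  rw [Matrix.det_fin_two] at hdet
  by_cases hxw : m 0 0 + m 1 1 = 0
  · exact absurd (show (2:K) = 0 by linear_combination -h00 - hdet + m 0 0 * hxw) h2
  · have hy : m 0 1 = 0 := by
      rcases mul_eq_zero.mp (show m 0 1 * (m 0 0 + m 1 1) = 0 by linear_combination h01) with h | h
      · exact h
      · exact absurd h hxw
    have hz : m 1 0 = 0 := by
      rcases mul_eq_zero.mp (show m 1 0 * (m 0 0 + m 1 1) = 0 by linear_combination h10) with h | h
      · exact h
      · exact absurd h hxw
    have hx2 : m 0 0 * m 0 0 = 1 := by linear_combination h00 - m 1 0 * hy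
    have hw : m 1 1 = m 0 0 := by
      have hxw1 : m 0 0 * m 1 1 = 1 := by linear_combination hdet + m 0 1 * hz
      calc m 1 1 = m 0 0 * m 0 0 * m 1 1 := by rw [hx2]; ring
      _ = m 0 0 := by rw [mul_assoc, hxw1, mul_one]
    rcases mul_self_eq_one_iff.mp hx2 with hx | hx
    · exact absurd (by rw [Matrix.eta_fin_two m, hy, hz, hw, hx]; exact Matrix.one_fin_two.symm) hne
    · rw [Matrix.eta_fin_two m, hy, hz, hw, hx]
      rw [show (-1 : Matrix (Fin 2) (Fin 2) K) = -(!![1,0;0,1]) from by rw [← Matrix.one_fin_two]]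
      ext i j
      fin_cases i <;> fin_cases j <;> simp

lemma commutant_scalar {K : Type*} [Field K] (h2 : (2:K) ≠ 0)
    (a b g : Matrix (Fin 2) (Fin 2) K)
    (hdeta : a.det = 1) (hbu : IsUnit b)
    (haa : a * a = -1) (hanti : b * a = -(a * b))
    (hga : g * a = a * g) (hgb : g * b = b * g) :
    ∃ c : K, g = c • (1 : Matrix (Fin 2) (Fin 2) K) := by
  -- a is not scalar
  have hans : ∀ c : K, a ≠ c • 1 := by
    rintro c rfl
    have hcc : c * c = -1 := by
      have h1 := congrFun (congrFun haa 0) 0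
      simpa [Matrix.mul_apply, Fin.sum_univ_two, Matrix.one_apply, Matrix.smul_apply] using h1
    have hdet : c = 1 ∨ c = -1 := by
      have := hdeta
      simp [Matrix.det_smul, Fin.prod_univ_two] at this
      exact this
    rcases hdet with h | h <;> rw [h] at hcc <;> exact h2 (by linear_combination hcc)
  -- from c₀ • 1 + c₁ • a = 0 conclude both zero
  have key : ∀ c0 c1 : K, c0 • (1 : Matrix (Fin 2) (Fin 2) K) + c1 • a = 0 → c0 = 0 ∧ c1 = 0 := by
    intro c0 c1 h
    by_cases hc1 : c1 = 0
    · refine ⟨?_, hc1⟩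
      rw [hc1, zero_smul, add_zero, smul_eq_zero] at h
      rcases h with h | h
      · exact h
      · exact absurd h one_ne_zero
    · exfalso
      apply hans (-(c1⁻¹ * c0))
      have h3 : c1 • a = -(c0 • (1 : Matrix (Fin 2) (Fin 2) K)) := by
        rw [eq_neg_iff_add_eq_zero, add_comm]; exact h
      have h4 := congrArg (fun m => (c1⁻¹ : K) • m) h3
      simp only [smul_smul, inv_mul_cancel₀ hc1, one_smul, smul_neg] at h4
      rw [h4, neg_smul]
  have haaa : a * a * a = -a := by rw [haa, neg_one_mul]
  have haba : a * b * a = b := by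
    rw [mul_assoc, hanti, mul_neg, ← mul_assoc, haa, neg_one_mul, neg_neg]
  have haaba : a * (a * b) * a = a * b := by
    rw [← mul_assoc a a b, haa, neg_one_mul, neg_mul, hanti, neg_neg]
  -- linear independence of 1, a, b, ab
  have hind : LinearIndependent K ![(1 : Matrix (Fin 2) (Fin 2) K), a, b, a * b] := by
    rw [Fintype.linearIndependent_iff]
    intro c hc
    simp only [Fin.sum_univ_four, Matrix.cons_val_zero, Matrix.cons_val_one, Matrix.head_cons,
      Matrix.cons_val_two, Matrix.tail_cons, Matrix.cons_val_three] at hc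
    have E2 : c 0 • (-1 : Matrix (Fin 2) (Fin 2) K) + c 1 • (-a) + c 2 • b + c 3 • (a * b)
        = 0 := by
      have h5 := congrArg (fun m => a * m * a) hc
      simp only [mul_add, add_mul, Matrix.mul_smul, Matrix.smul_mul, mul_zero, zero_mul,
        mul_one] at h5
      rw [haa, haba, haaba, neg_one_mul] at h5
      exact h5
    have E3 : ((2 * c 2) • (1 : Matrix (Fin 2) (Fin 2) K) + (2 * c 3) • a) * b = 0 := by
      rw [add_mul, Matrix.smul_mul, Matrix.smul_mul, one_mul]
      linear_combination (norm := module) hc + E2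
    rw [hbu.mul_left_eq_zero] at E3
    obtain ⟨h6, h7⟩ := key _ _ E3
    have hc2 : c 2 = 0 := by rcases mul_eq_zero.mp h6 with h | h; exact absurd h h2; exact h
    have hc3 : c 3 = 0 := by rcases mul_eq_zero.mp h7 with h | h; exact absurd h h2; exact h
    rw [hc2, hc3, zero_smul, zero_smul, add_zero, add_zero] at hc
    obtain ⟨hc0, hc1⟩ := key _ _ hc
    intro i
    fin_cases i <;> assumption
  have hsp : Submodule.span K (Set.range ![(1 : Matrix (Fin 2) (Fin 2) K), a, b, a * b]) = ⊤ :=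
    hind.span_eq_top_of_card_eq_finrank (by simp [Module.finrank_matrix])
  have hcomm : ∀ m : Matrix (Fin 2) (Fin 2) K, g * m = m * g := by
    intro m
    have hm : m ∈ Submodule.span K (Set.range ![(1 : Matrix (Fin 2) (Fin 2) K), a, b, a * b]) := by
      rw [hsp]; trivial
    induction hm using Submodule.span_induction with
    | mem x hx =>
      obtain ⟨i, rfl⟩ := hx
      fin_cases i
      · simp
      · exact hga
      · exact hgb
      · show g * (a * b) = (a * b) * g
        rw [← mul_assoc, hga, mul_assoc, hgb, ← mul_assoc]
    | zero => simp
    | add x y _ _ hx hy => rw [mul_add, add_mul, hx, hy]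
    | smul t x _ hx => rw [Matrix.mul_smul, Matrix.smul_mul, hx]
  obtain ⟨c, hc⟩ := Matrix.mem_range_scalar_of_commute_single
    (fun i j _ => (hcomm _).symm)
  exact ⟨c, by rw [← hc]; ext i j; simp [Matrix.scalar_apply, Matrix.one_apply, Matrix.diagonal]⟩

/-- Let `q` be an odd prime and `K` an algebraic closure of the field with `q` elements.
Then any subgroup `Q` of `SL(2,K)` isomorphic to the quaternion group of order `8`
contains its own centralizer in `SL(2,K)`. -/
theorem stmt_4 (q : ℕ) [Fact (Nat.Prime q)] (hodd : Odd q)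
    (K : Type*) [Field K] [Algebra (ZMod q) K] [IsAlgClosure (ZMod q) K]
    (Q : Subgroup (Matrix.SpecialLinearGroup (Fin 2) K))
    (hQ : Nonempty (Q ≃* QuaternionGroup 2)) :
    Subgroup.centralizer (Q : Set (Matrix.SpecialLinearGroup (Fin 2) K)) ≤ Q := by
  have hq : Nat.Prime q := Fact.out
  haveI : CharP K q := charP_of_injective_algebraMap (algebraMap (ZMod q) K).injective q
  have h2 : (2:K) ≠ 0 := by
    intro h
    have hd : q ∣ 2 := (CharP.cast_eq_zero_iff K q 2).mp (by exact_mod_cast h)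
    have : q = 2 := (Nat.prime_dvd_prime_iff_eq hq Nat.prime_two).mp hd
    rw [this, Nat.odd_iff] at hodd
    simp at hodd
  obtain ⟨e⟩ := hQ
  intro g hg
  have hcent := Subgroup.mem_centralizer_iff.mp hg
  set AQ : Q := e.symm (QuaternionGroup.a 1) with hAQ
  set BQ : Q := e.symm (QuaternionGroup.xa 0) with hBQ
  set CQ : Q := e.symm (QuaternionGroup.a 2) with hCQ
  set A : Matrix.SpecialLinearGroup (Fin 2) K := (AQ : Matrix.SpecialLinearGroup (Fin 2) K)
  set B : Matrix.SpecialLinearGroup (Fin 2) K := (BQ : Matrix.SpecialLinearGroup (Fin 2) K)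
  set C : Matrix.SpecialLinearGroup (Fin 2) K := (CQ : Matrix.SpecialLinearGroup (Fin 2) K)
  -- group identities
  have hAA : A * A = C := by
    rw [show A * A = ((AQ * AQ : Q) : Matrix.SpecialLinearGroup (Fin 2) K) from rfl]
    congr 1
    rw [hAQ, hCQ, ← map_mul]
    congr 1
  have hCC : C * C = 1 := by
    rw [show C * C = ((CQ * CQ : Q) : Matrix.SpecialLinearGroup (Fin 2) K) from rfl]
    rw [hCQ, ← map_mul, show (QuaternionGroup.a 2 : QuaternionGroup 2) * QuaternionGroup.a 2 = 1
      from by decide, map_one]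
    rfl
  have hCne : C ≠ 1 := by
    intro h
    have : CQ = 1 := Subtype.ext h
    have := congrArg e this
    rw [hCQ, MulEquiv.apply_symm_apply, map_one] at this
    exact absurd this (by decide)
  have hBA : B * A = A * A * A * B := by
    have h1 : BQ * AQ = AQ * AQ * AQ * BQ := by
      rw [hAQ, hBQ, ← map_mul, ← map_mul, ← map_mul, ← map_mul]
      congr 1
    calc B * A = ((BQ * AQ : Q) : Matrix.SpecialLinearGroup (Fin 2) K) := rfl
    _ = ((AQ * AQ * AQ * BQ : Q) : Matrix.SpecialLinearGroup (Fin 2) K) := by rw [h1]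
    _ = A * A * A * B := rfl
  -- matrix level
  set a : Matrix (Fin 2) (Fin 2) K := (A : Matrix (Fin 2) (Fin 2) K)
  set b : Matrix (Fin 2) (Fin 2) K := (B : Matrix (Fin 2) (Fin 2) K)
  have hCval : (C : Matrix (Fin 2) (Fin 2) K) = -1 := by
    refine sl2_sq_one h2 _ C.prop ?_ ?_
    · exact_mod_cast congrArg Subtype.val hCC
    · intro h
      exact hCne (Subtype.ext (by rw [h]; rfl))
  have haa : a * a = -1 := by
    have := congrArg Subtype.val hAA
    rw [Matrix.SpecialLinearGroup.coe_mul] at this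
    rw [this, hCval]
  have hanti : b * a = -(a * b) := by
    have := congrArg Subtype.val hBA
    simp only [Matrix.SpecialLinearGroup.coe_mul] at this
    rw [this, haa, neg_one_mul, neg_mul]
  have hbu : IsUnit b := by
    rw [Matrix.isUnit_iff_isUnit_det, B.prop]
    exact isUnit_one
  have hga : (g : Matrix (Fin 2) (Fin 2) K) * a = a * (g : Matrix (Fin 2) (Fin 2) K) := by
    have := congrArg Subtype.val (hcent A (SetLike.coe_mem AQ)).symm
    simpa using this
  have hgb : (g : Matrix (Fin 2) (Fin 2) K) * b = b * (g : Matrix (Fin 2) (Fin 2) K) := by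
    have := congrArg Subtype.val (hcent B (SetLike.coe_mem BQ)).symm
    simpa using this
  obtain ⟨c, hc⟩ := commutant_scalar h2 a b (g : Matrix (Fin 2) (Fin 2) K) A.prop hbu haa hanti
    hga hgb
  have hc2 : c * c = 1 := by
    have := g.prop
    rw [hc] at this
    simp [Matrix.det_smul, Fin.prod_univ_two] at this
    rcases this with h | h <;> rw [h] <;> ring
  rcases mul_self_eq_one_iff.mp hc2 with h | h
  · have : g = 1 := Subtype.ext (by rw [hc, h, one_smul]; rfl)
    rw [this]; exact Q.one_mem
  · have : g = C := Subtype.ext (by rw [hc, h, neg_smul, one_smul, hCval])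
    rw [this]
    exact SetLike.coe_mem CQ
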